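/- arXiv:2101.03052 — 2 statements merged into one kernel-verified Lean document; each statement's English description precedes it below -/
import Mathlib

section
/- For partitions t^a ∈ Part^⟨m^a⟩ indexed by a finite totally ordered set A, there is a unique element ◁_A t^a ∈ Part^⟨Σ_A m^a⟩ obtained by sorting the multiset of all values t^{a,i} into nondecreasing order, and for each a ∈ A the monotone map δ^a : ⟨Σ_A m^a⟩ → ⟨m^a⟩ defined by δ^a i = min{ j : (◁_A t^{a'})^i ≤ t^{a,j} } (and m^a if no such j exists) satisfies δ^a · (◁_A t^{a'}) = t^a. -/
/-- `Part^⟨m⟩`: partitions of the interval, i.e. monotone functions `Fin m → [0,1]`. -/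
def PartSp (m : ℕ) : Type := { t : Fin m → unitInterval // Monotone t }

open Classical in
/-- The monotone map `δ^a i := min { j | (◁_A t)^i ≤ t^{a,j} }`, with value `m a` when no
such `j` exists, associated to a family of partitions `t` and a partition `s`
(meant to be the ordering `◁_A t^a` of all the values). -/
noncomputable def deltaMap {A : Type} [Fintype A] (m : A → ℕ) (t : ∀ a, PartSp (m a))
    (s : PartSp (∑ a, m a)) (a : A) (i : Fin (∑ a, m a)) : ℕ :=
  if h : { j : ℕ | ∃ hj : j < m a, (s.1 i : ℝ) ≤ ((t a).1 ⟨j, hj⟩ : ℝ) }.Nonempty then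
    sInf { j : ℕ | ∃ hj : j < m a, (s.1 i : ℝ) ≤ ((t a).1 ⟨j, hj⟩ : ℝ) }
  else m a

lemma multiset_card_sum {A : Type} [Fintype A] (f : A → Multiset unitInterval) :
    Multiset.card (∑ a : A, f a) = ∑ a, Multiset.card (f a) :=
  map_sum (⟨⟨Multiset.card, Multiset.card_zero⟩, Multiset.card_add⟩ :
    Multiset unitInterval →+ ℕ) f Finset.univ

lemma multiset_map_sum {A : Type} [Fintype A] (f : A → Multiset unitInterval) (g : unitInterval → ℝ) :
    (∑ a : A, f a).map g = ∑ a, (f a).map g :=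
  map_sum (Multiset.mapAddMonoidHom g) f Finset.univ

/-- δ i ≤ j iff s i ≤ t a j -/
lemma delta_le_iff {A : Type} [Fintype A] (m : A → ℕ) (t : ∀ a, PartSp (m a))
    (s : PartSp (∑ a, m a)) (a : A) (i : Fin (∑ a, m a)) (j : Fin (m a)) :
    deltaMap m t s a i ≤ (j : ℕ) ↔ (s.1 i : ℝ) ≤ ((t a).1 j : ℝ) := by
  classical
  unfold deltaMap
  set S := { j' : ℕ | ∃ hj : j' < m a, (s.1 i : ℝ) ≤ ((t a).1 ⟨j', hj⟩ : ℝ) } with hS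
  constructor
  · intro h
    by_cases hne : S.Nonempty
    · rw [dif_pos hne] at h
      obtain ⟨hlt, hle⟩ := Nat.sInf_mem hne
      refine hle.trans ?_
      exact_mod_cast (t a).2 (show (⟨sInf S, hlt⟩ : Fin (m a)) ≤ j from h)
    · rw [dif_neg hne] at h
      exact absurd (lt_of_lt_of_le j.2 h) (lt_irrefl _)
  · intro h
    have hj : (j : ℕ) ∈ S := ⟨j.2, by simpa using h⟩
    rw [dif_pos ⟨_, hj⟩]
    exact Nat.sInf_le hj


/-- For partitions `t^a ∈ Part^⟨m^a⟩` indexed by a finite totally ordered set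
`A`, there is a unique element `◁_A t^a ∈ Part^⟨Σ_A m^a⟩` obtained by sorting the multiset
of all the values `t^{a,i}` into nondecreasing order (i.e. the unique monotone sequence
whose multiset of values is the sum of the multisets of values of the `t^a`); moreover for
each `a ∈ A` the map `δ^a i = min { j | (◁_A t)^i ≤ t^{a,j} }` (and `m^a` if no such `j`
exists) is monotone and recovers `t^a` from `◁_A t^a`, i.e. `δ^a · (◁_A t^{a'}) = t^a`:
each `t^{a,j}` is the largest value `(◁_A t)^i` with `δ^a i ≤ j` (and `0` if there is
none). -/
theorem stmt_8 (A : Type) [Fintype A] [LinearOrder A] (m : A → ℕ)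
    (t : ∀ a, PartSp (m a)) :
    (∃! s : PartSp (∑ a, m a),
      (Finset.univ.val.map fun i => ((s.1 i : ℝ)))
        = ∑ a : A, Finset.univ.val.map fun i => (((t a).1 i : ℝ))) ∧
    (∀ s : PartSp (∑ a, m a),
      ((Finset.univ.val.map fun i => ((s.1 i : ℝ)))
          = ∑ a : A, Finset.univ.val.map fun i => (((t a).1 i : ℝ))) →
      ∀ a : A,
        Monotone (deltaMap m t s a) ∧
        ∀ j : Fin (m a),
          ((t a).1 j : ℝ)
            = sSup { x : ℝ | x = 0 ∨
                ∃ i : Fin (∑ a, m a), deltaMap m t s a i ≤ (j : ℕ) ∧ x = (s.1 i : ℝ) }) := by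
  classical
  constructor
  · -- existence and uniqueness
    set M : Multiset unitInterval := ∑ a : A, Finset.univ.val.map (t a).1 with hM
    have hcard : Multiset.card M = ∑ a, m a := by
      rw [hM, multiset_card_sum]; simp
    set l := M.sort (· ≤ ·) with hl
    have hlen : l.length = ∑ a, m a := by rw [hl, Multiset.length_sort, hcard]
    have hsorted : l.Pairwise (· ≤ ·) := Multiset.pairwise_sort _ _
    have hofn : List.ofFn (fun i => l.get (Fin.cast hlen.symm i)) = l := by
      apply List.ext_get (by simp [hlen])
      intro n h1 h2
      simp [List.get_ofFn]
    have hmaps : Multiset.map (fun x : unitInterval => (x : ℝ)) M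
        = ∑ a : A, Finset.univ.val.map fun i => (((t a).1 i : ℝ)) := by
      rw [hM, multiset_map_sum]
      refine Finset.sum_congr rfl fun a _ => ?_
      rw [Multiset.map_map]
      rfl
    refine ⟨⟨fun i => l.get (Fin.cast hlen.symm i), fun i j hij => hsorted.sortedLE (by simpa using hij)⟩, ?_, ?_⟩
    · -- the sorted list has the right multiset
      have h1 : Finset.univ.val.map (fun i => l.get (Fin.cast hlen.symm i)) = M := by
        rw [Fin.univ_val_map, hofn, hl, Multiset.sort_eq]
      show Finset.univ.val.map (fun i => ((l.get (Fin.cast hlen.symm i) : ℝ))) = _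
      have h2 : (Finset.univ.val.map (fun i => ((l.get (Fin.cast hlen.symm i) : ℝ))))
          = (Finset.univ.val.map (fun i => l.get (Fin.cast hlen.symm i))).map (fun x : unitInterval => (x : ℝ)) := by
        rw [Multiset.map_map]; rfl
      rw [h2, h1, hmaps]
    · -- uniqueness
      intro s hs
      have hs1 : Finset.univ.val.map s.1 = M := by
        apply Multiset.map_injective (f := fun x : unitInterval => (x : ℝ)) Subtype.coe_injective
        rw [hmaps, Multiset.map_map]
        exact hs
      have hperm : List.ofFn s.1 = l := by
        apply List.Perm.eq_of_sortedLE
        rotate_left 2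
        · rw [← Multiset.coe_eq_coe, ← Fin.univ_val_map, hs1, hl, Multiset.sort_eq]
        · exact List.sortedLE_ofFn_iff.mpr s.2
        · exact hsorted.sortedLE
      exact Subtype.ext (List.ofFn_injective (hperm.trans hofn.symm))
  · -- second part
    intro s hs a
    constructor
    · -- monotone
      intro i i' hii
      have hsle : s.1 i ≤ s.1 i' := s.2 hii
      unfold deltaMap
      set S := { j : ℕ | ∃ hj : j < m a, (s.1 i : ℝ) ≤ ((t a).1 ⟨j, hj⟩ : ℝ) } with hSd
      set S' := { j : ℕ | ∃ hj : j < m a, (s.1 i' : ℝ) ≤ ((t a).1 ⟨j, hj⟩ : ℝ) } with hSd'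
      have hsub : S' ⊆ S := fun j ⟨hj, hle⟩ => ⟨hj, le_trans (by exact_mod_cast hsle) hle⟩
      by_cases h' : S'.Nonempty
      · rw [dif_pos h', dif_pos (h'.mono hsub)]
        exact Nat.sInf_le (hsub (Nat.sInf_mem h'))
      · rw [dif_neg h']
        by_cases h : S.Nonempty
        · rw [dif_pos h]
          exact le_of_lt (Nat.sInf_mem h).1
        · rw [dif_neg h]
    · intro j
      -- t a j is a value of s
      have hmem : ((t a).1 j : ℝ) ∈ (Finset.univ.val.map fun i => ((s.1 i : ℝ))) := by
        rw [hs]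
        rw [Multiset.mem_sum]
        exact ⟨a, Finset.mem_univ a, Multiset.mem_map.2 ⟨j, Finset.mem_univ_val j, rfl⟩⟩
      obtain ⟨i0, _, hi0⟩ := Multiset.mem_map.1 hmem
      set X := { x : ℝ | x = 0 ∨
          ∃ i : Fin (∑ a, m a), deltaMap m t s a i ≤ (j : ℕ) ∧ x = (s.1 i : ℝ) } with hX
      have hbdd : ∀ x ∈ X, x ≤ ((t a).1 j : ℝ) := by
        rintro x (rfl | ⟨i, hdi, rfl⟩)
        · exact ((t a).1 j).2.1
        · exact (delta_le_iff m t s a i j).1 hdi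
      have htmem : ((t a).1 j : ℝ) ∈ X := by
        refine Or.inr ⟨i0, ?_, hi0.symm⟩
        exact (delta_le_iff m t s a i0 j).2 (le_of_eq hi0)
      refine le_antisymm (le_csSup ⟨_, hbdd⟩ htmem) (csSup_le ⟨_, htmem⟩ hbdd)
end

section
/- For U ≤ V finite-dimensional subspaces of ℝ^∞, the map i^U_V : Emb_U → Emb_V defined by (i^U_V α)_a(v) := v_{V−U} + α_a(v_U), where v_U and v_{V−U} are the orthogonal projections onto U and V ∩ U^⊥, is a morphism of operads: it preserves identities and compositions. -/
/-- A family `⟨α_a⟩` of self-maps such that the induced map `⊔_A U → U` is an embedding,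
i.e. each `α_a` is a topological embedding and the images are pairwise disjoint. -/
def IsEmbFam {U : Type} [TopologicalSpace U] {A : Type} (α : A → U → U) : Prop :=
  (∀ a, Topology.IsEmbedding (α a)) ∧
    Pairwise fun a a' => Disjoint (Set.range (α a)) (Set.range (α a'))

/-- The operadic composition of families of self-maps, indexed by `Σ_A B^a` via
`(a, b) ↦ α_a ∘ β^a_b`. -/
def compF {U : Type} {A : Type} {B : A → Type} (α : A → U → U)
    (β : ∀ a, B a → U → U) : ((a : A) × B a) → U → U :=
  fun p => α p.1 ∘ β p.1 p.2

/-- The operad map `i^U_V : Emb_U → Emb_V` for `U ≤ V`, defined by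
`(i^U_V α)_a(v) := v_{V−U} + α_a(v_U)`, where `v_U` and `v_{V−U}` are the orthogonal
projections onto `U` and `V ⊓ Uᗮ`. -/
noncomputable def iUV {E : Type} [NormedAddCommGroup E] [InnerProductSpace ℝ E]
    (U V : Submodule ℝ E) [FiniteDimensional ℝ U] [FiniteDimensional ℝ V] (hUV : U ≤ V)
    {A : Type} (α : A → ↥U → ↥U) : A → ↥V → ↥V :=
  haveI : FiniteDimensional ℝ ↥(V ⊓ Uᗮ) := Submodule.finiteDimensional_of_le inf_le_left
  fun a v =>
    Submodule.inclusion inf_le_left (Submodule.orthogonalProjectionOnto (V ⊓ Uᗮ) (v : E)) +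
      Submodule.inclusion hUV (α a (Submodule.orthogonalProjectionOnto U (v : E)))

section helpers


variable {E : Type} [NormedAddCommGroup E] [InnerProductSpace ℝ E]
  (U V : Submodule ℝ E) [FiniteDimensional ℝ U] [FiniteDimensional ℝ V]

instance : FiniteDimensional ℝ ↥(V ⊓ Uᗮ) := Submodule.finiteDimensional_of_le inf_le_left

lemma projU_coeU (u : U) : Submodule.orthogonalProjectionOnto U (u : E) = u :=
  Submodule.orthogonalProjectionOnto_mem_subspace_eq_self u

lemma projU_coeW (w : ↥(V ⊓ Uᗮ)) : Submodule.orthogonalProjectionOnto U (w : E) = 0 :=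
  Submodule.orthogonalProjectionOnto_apply_of_mem_orthogonal (Submodule.mem_inf.mp w.2).2

lemma projW_coeW (w : ↥(V ⊓ Uᗮ)) : Submodule.orthogonalProjectionOnto (V ⊓ Uᗮ) (w : E) = w :=
  Submodule.orthogonalProjectionOnto_mem_subspace_eq_self w

lemma projW_coeU (u : U) : Submodule.orthogonalProjectionOnto (V ⊓ Uᗮ) (u : E) = 0 := by
  refine Submodule.orthogonalProjectionOnto_apply_of_mem_orthogonal ?_
  exact Submodule.orthogonal_le inf_le_right (Submodule.le_orthogonal_orthogonal U u.2)

lemma decompV (hUV : U ≤ V) (v : V) :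
    ((Submodule.orthogonalProjectionOnto (V ⊓ Uᗮ) (v : E) : E) + (Submodule.orthogonalProjectionOnto U (v : E) : E)) = v := by
  set u := Submodule.orthogonalProjectionOnto U (v : E) with hu
  have h1 : (v : E) - u ∈ Uᗮ := Submodule.sub_starProjection_mem_orthogonal (v : E)
  have h2 : (v : E) - (u : E) ∈ V := V.sub_mem v.2 (hUV u.2)
  have hmem : (v : E) - (u : E) ∈ V ⊓ Uᗮ := Submodule.mem_inf.mpr ⟨h2, h1⟩
  have : Submodule.orthogonalProjectionOnto (V ⊓ Uᗮ) (v : E)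
      = Submodule.orthogonalProjectionOnto (V ⊓ Uᗮ) (((v : E) - u) + u) := by rw [sub_add_cancel]
  rw [this, map_add, projW_coeU, add_zero,
    show Submodule.orthogonalProjectionOnto (V ⊓ Uᗮ) ((v : E) - u) = ⟨(v : E) - u, hmem⟩ from
      Submodule.orthogonalProjectionOnto_mem_subspace_eq_self (⟨(v : E) - u, hmem⟩ : ↥(V ⊓ Uᗮ))]
  simp

lemma iUV_coe (hUV : U ≤ V) {A : Type} (α : A → ↥U → ↥U) (a : A) (v : V) :
    (iUV U V hUV α a v : E)
      = (Submodule.orthogonalProjectionOnto (V ⊓ Uᗮ) (v : E) : E) + (α a (Submodule.orthogonalProjectionOnto U (v : E)) : E) :=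
  rfl

lemma projU_iUV (hUV : U ≤ V) {A : Type} (α : A → ↥U → ↥U) (a : A) (v : V) :
    Submodule.orthogonalProjectionOnto U (iUV U V hUV α a v : E) = α a (Submodule.orthogonalProjectionOnto U (v : E)) := by
  rw [iUV_coe, map_add, projU_coeW, zero_add, projU_coeU]

lemma projW_iUV (hUV : U ≤ V) {A : Type} (α : A → ↥U → ↥U) (a : A) (v : V) :
    Submodule.orthogonalProjectionOnto (V ⊓ Uᗮ) (iUV U V hUV α a v : E)
      = Submodule.orthogonalProjectionOnto (V ⊓ Uᗮ) (v : E) := by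
  rw [iUV_coe, map_add, projW_coeW, projW_coeU, add_zero]

end helpers

/-- For `U ≤ V` finite-dimensional subspaces of `ℝ^∞` (here: of an arbitrary
real inner product space), the map `i^U_V : Emb_U → Emb_V`,
`(i^U_V α)_a(v) := v_{V−U} + α_a(v_U)`, is a morphism of operads: it carries families of
embeddings with pairwise disjoint images to such families, preserves the identity, and
preserves compositions. -/
theorem stmt_12 (E : Type) [NormedAddCommGroup E] [InnerProductSpace ℝ E]
    (U V : Submodule ℝ E) [FiniteDimensional ℝ U] [FiniteDimensional ℝ V] (hUV : U ≤ V) :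
    (∀ {A : Type} (α : A → ↥U → ↥U), IsEmbFam α → IsEmbFam (iUV U V hUV α)) ∧
    (∀ {A : Type} (a : A) (v : ↥V), iUV U V hUV (fun _ (u : ↥U) => u) a v = v) ∧
    (∀ {A : Type} {B : A → Type} (α : A → ↥U → ↥U) (β : ∀ a, B a → ↥U → ↥U)
        (p : (a : A) × B a) (v : ↥V),
      iUV U V hUV (compF α β) p v
        = compF (iUV U V hUV α) (fun a => iUV U V hUV (β a)) p v) := by
  -- the homeomorphism V ≃ (V ⊓ Uᗮ) × U
  set f : V → ↥(V ⊓ Uᗮ) × ↥U :=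
    fun v => (Submodule.orthogonalProjectionOnto (V ⊓ Uᗮ) (v : E), Submodule.orthogonalProjectionOnto U (v : E)) with hf
  set g : ↥(V ⊓ Uᗮ) × ↥U → V :=
    fun p => Submodule.inclusion inf_le_left p.1 + Submodule.inclusion hUV p.2 with hg
  have hfc : Continuous f := by
    apply Continuous.prodMk
    · exact (Submodule.orthogonalProjectionOnto (V ⊓ Uᗮ)).continuous.comp continuous_subtype_val
    · exact (Submodule.orthogonalProjectionOnto U).continuous.comp continuous_subtype_val
  have hgc : Continuous g := by
    apply Continuous.add
    · exact Continuous.subtype_mk (continuous_subtype_val.comp continuous_fst) _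
    · exact Continuous.subtype_mk (continuous_subtype_val.comp continuous_snd) _
  have hgf : Function.LeftInverse g f := by
    intro v
    apply Subtype.ext
    simpa [hg, hf] using decompV U V hUV v
  have hfg : Function.LeftInverse f g := by
    intro p
    have h1 : (g p : E) = (p.1 : E) + (p.2 : E) := rfl
    apply Prod.ext
    · simp [hf, h1, map_add, projW_coeW, projW_coeU]
    · simp [hf, h1, map_add, projU_coeW, projU_coeU]
  have hfe : Topology.IsEmbedding f := hgf.isEmbedding hgc hfc
  have hge : Topology.IsEmbedding g := hfg.isEmbedding hfc hgc
  refine ⟨?_, ?_, ?_⟩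
  · intro A α hα
    constructor
    · intro a
      have heq : iUV U V hUV α a = g ∘ Prod.map id (α a) ∘ f := rfl
      rw [heq]
      exact hge.comp ((Topology.IsEmbedding.id.prodMap (hα.1 a)).comp hfe)
    · intro a a' haa'
      rw [Set.disjoint_left]
      rintro x ⟨v, rfl⟩ ⟨v', hv'⟩
      have h1 : Submodule.orthogonalProjectionOnto U (iUV U V hUV α a v : E) ∈ Set.range (α a) :=
        ⟨_, (projU_iUV U V hUV α a v).symm⟩
      have h2 : Submodule.orthogonalProjectionOnto U (iUV U V hUV α a v : E) ∈ Set.range (α a') := by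
        rw [← hv']
        exact ⟨_, (projU_iUV U V hUV α a' v').symm⟩
      exact Set.disjoint_left.mp (hα.2 haa') h1 h2
  · intro A a v
    apply Subtype.ext
    rw [iUV_coe U V hUV (fun _ u => u) a v]
    exact decompV U V hUV v
  · intro A B α β p v
    apply Subtype.ext
    show _ = (iUV U V hUV α p.1 (iUV U V hUV (β p.1) p.2 v) : E)
    rw [iUV_coe, iUV_coe, projW_iUV, projU_iUV]
    rfl
end
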